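/- Let κ ∈ (−1,1)∖{0} and z ∈ 𝔻, and let R := √((1−z)² + 4κ²z) denote the principal branch square root (well-defined since (1−z)² + 4κ²z ∉ (−∞,0] for z ∈ 𝔻). Then Re( (1+z) · conj(R) ) > 0; consequently |1+z−R| < |1+z+R|, i.e. the quantity y(z,κ) := (1+z−R)/(1+z+R) = 4z(1−κ²)/(1+z+R)² lies in the open unit disc. -/

import Mathlib

/-- `R(z,w) = √((1-z)² + 4w²z)`, principal branch. -/
noncomputable def Rfun (z w : ℂ) : ℂ := ((1 - z) ^ 2 + 4 * w ^ 2 * z) ^ (1 / 2 : ℂ)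

open Complex Set

/-- Square of the principal square root. -/
lemma sq_half_cpow {A : ℂ} (hA : A ≠ 0) : (A ^ (1 / 2 : ℂ)) ^ 2 = A := by
  rw [sq, ← Complex.cpow_add _ _ hA]
  norm_num

/-- Positive real part of principal square root on the slit plane. -/
lemma re_half_cpow_pos {A : ℂ} (hA : A ∈ Complex.slitPlane) : 0 < (A ^ (1 / 2 : ℂ)).re := by
  have hA0 : A ≠ 0 := Complex.slitPlane_ne_zero hA
  rw [Complex.cpow_def_of_ne_zero hA0, Complex.exp_re]
  have him : (Complex.log A * (1 / 2)).im = A.arg / 2 := by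
    simp [Complex.log_im, Complex.mul_im]
    ring
  rw [him]
  have h1 : -Real.pi < A.arg := Complex.neg_pi_lt_arg A
  have h2 : A.arg < Real.pi := by
    rcases lt_or_eq_of_le (Complex.arg_le_pi A) with h | h
    · exact h
    · exfalso
      rw [Complex.arg_eq_pi_iff] at h
      rcases (Complex.mem_slitPlane_iff.mp hA) with hre | him0
      · linarith [h.1]
      · exact him0 h.2
  have hpi := Real.pi_pos
  exact mul_pos (Real.exp_pos _) (Real.cos_pos_of_mem_Ioo ⟨by linarith, by linarith⟩)

/-- The discriminant avoids the negative real axis on the ball. -/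
lemma disc_mem_slitPlane (κ : ℝ) (hκ : κ ∈ Set.Ioo (-1 : ℝ) 1) (hκ0 : κ ≠ 0) {w : ℂ}
    (hw : w ∈ Metric.ball (0 : ℂ) 1) :
    (1 - w) ^ 2 + 4 * (κ : ℂ) ^ 2 * w ∈ Complex.slitPlane := by
  set x := w.re
  set y := w.im
  have hball : x ^ 2 + y ^ 2 < 1 := by
    have := Metric.mem_ball.mp hw
    rw [dist_zero_right] at this
    have h2 : ‖w‖ ^ 2 < 1 := by
      nlinarith [norm_nonneg w]
    rwa [Complex.sq_norm, Complex.normSq_apply, ← sq, ← sq] at h2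
  have hk1 : κ ^ 2 < 1 := by nlinarith [hκ.1, hκ.2]
  have hk0 : 0 < κ ^ 2 := by positivity
  rw [Complex.mem_slitPlane_iff]
  by_contra h
  push_neg at h
  obtain ⟨hre, him⟩ := h
  have hre' : ((1 - w) ^ 2 + 4 * (κ : ℂ) ^ 2 * w).re =
      1 - 2 * x + x ^ 2 - y ^ 2 + 4 * κ ^ 2 * x := by
    simp [Complex.add_re, Complex.mul_re, Complex.mul_im, Complex.sub_re, Complex.sub_im, sq]
    ring
  have him' : ((1 - w) ^ 2 + 4 * (κ : ℂ) ^ 2 * w).im =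
      -2 * y + 2 * x * y + 4 * κ ^ 2 * y := by
    simp [Complex.add_im, Complex.mul_re, Complex.mul_im, Complex.sub_re, Complex.sub_im, sq]
    ring
  rw [hre'] at hre
  rw [him'] at him
  -- from him : y * (2x + 4κ² - 2) = 0
  have hfac : y * (2 * x + 4 * κ ^ 2 - 2) = 0 := by linarith [him]
  rcases mul_eq_zero.mp hfac with hy | hx
  · -- y = 0
    nlinarith [sq_nonneg (x + 2 * κ ^ 2 - 1), mul_pos hk0 (by linarith : (0:ℝ) < 1 - κ ^ 2)]
  · -- x = 1 - 2κ²
    have hx' : x = 1 - 2 * κ ^ 2 := by linarith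
    nlinarith [hball]

theorem stmt17 (κ : ℝ) (hκ : κ ∈ Set.Ioo (-1 : ℝ) 1) (hκ0 : κ ≠ 0) (z : ℂ)
    (hz : z ∈ Metric.ball (0 : ℂ) 1) :
    0 < ((1 + z) * (starRingEnd ℂ) (Rfun z (κ : ℂ))).re ∧
    ‖1 + z - Rfun z (κ : ℂ)‖ < ‖1 + z + Rfun z (κ : ℂ)‖ ∧
    (1 + z - Rfun z (κ : ℂ)) / (1 + z + Rfun z (κ : ℂ)) =
      4 * z * (1 - (κ : ℂ) ^ 2) / (1 + z + Rfun z (κ : ℂ)) ^ 2 ∧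
    (1 + z - Rfun z (κ : ℂ)) / (1 + z + Rfun z (κ : ℂ)) ∈ Metric.ball (0 : ℂ) 1 := by
  have hk1 : κ ^ 2 < 1 := by nlinarith [hκ.1, hκ.2]
  have hk0 : 0 < κ ^ 2 := by positivity
  set A : ℂ → ℂ := fun w => (1 - w) ^ 2 + 4 * (κ : ℂ) ^ 2 * w with hAdef
  have hA : ∀ w ∈ Metric.ball (0 : ℂ) 1, A w ∈ Complex.slitPlane := fun w hw =>
    disc_mem_slitPlane κ hκ hκ0 hw
  have hsq : ∀ w ∈ Metric.ball (0 : ℂ) 1, (Rfun w (κ : ℂ)) ^ 2 = A w := fun w hw =>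
    sq_half_cpow (Complex.slitPlane_ne_zero (hA w hw))
  set f : ℂ → ℝ := fun w => ((1 + w) * (starRingEnd ℂ) (Rfun w (κ : ℂ))).re with hfdef
  -- f is never zero on the ball
  have hne : ∀ w ∈ Metric.ball (0 : ℂ) 1, f w ≠ 0 := by
    intro w hw hf0
    set x := w.re
    set y := w.im
    have hball : x ^ 2 + y ^ 2 < 1 := by
      have := Metric.mem_ball.mp hw
      rw [dist_zero_right] at this
      have h2 : ‖w‖ ^ 2 < 1 := by
        nlinarith [norm_nonneg w]
      rwa [Complex.sq_norm, Complex.normSq_apply, ← sq, ← sq] at h2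
    set u : ℂ := (1 + w) * (starRingEnd ℂ) (Rfun w (κ : ℂ)) with hudef
    have hure : u.re = 0 := hf0
    have hu2 : u ^ 2 = (1 + w) ^ 2 * (starRingEnd ℂ) (A w) := by
      rw [hudef, mul_pow, ← map_pow, hsq w hw]
    have him : (u ^ 2).im = 0 := by
      rw [sq]
      simp [Complex.mul_im, hure]
    have hre : (u ^ 2).re ≤ 0 := by
      rw [sq]
      simp [Complex.mul_re, hure]
      nlinarith [sq_nonneg u.im]
    rw [hu2] at him hre
    have him' : ((1 + w) ^ 2 * (starRingEnd ℂ) (A w)).im =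
        4 * (1 - κ ^ 2) * y * (1 - x ^ 2 - y ^ 2) := by
      simp [hAdef, Complex.mul_re, Complex.mul_im, Complex.add_re, Complex.add_im,
        Complex.sub_re, Complex.sub_im, sq]
      ring
    have hre' : ((1 + w) ^ 2 * (starRingEnd ℂ) (A w)).re =
        κ ^ 2 * ((1 + x) ^ 2 + y ^ 2) ^ 2 +
          (1 - κ ^ 2) * ((1 - x ^ 2 - y ^ 2) ^ 2 - 4 * y ^ 2) := by
      simp [hAdef, Complex.mul_re, Complex.mul_im, Complex.add_re, Complex.add_im,
        Complex.sub_re, Complex.sub_im, sq]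
      ring
    rw [him'] at him
    rw [hre'] at hre
    have hy : y = 0 := by
      have h1 : (0:ℝ) < 1 - x ^ 2 - y ^ 2 := by linarith
      have h2 : (0:ℝ) < 4 * (1 - κ ^ 2) := by linarith
      rcases mul_eq_zero.mp him with h | h
      · rcases mul_eq_zero.mp h with h' | h'
        · nlinarith
        · exact h'
      · linarith
    rw [hy] at hre hball
    have hx1 : -1 < x := by nlinarith
    nlinarith [pow_pos (by linarith : (0:ℝ) < 1 + x) 4, sq_nonneg (1 - x ^ 2),
      sq_nonneg ((1 - x) * (1 + x))]
  -- f is continuous on the ball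
  have hcont : ContinuousOn f (Metric.ball (0 : ℂ) 1) := by
    have hR : ContinuousOn (fun w => Rfun w (κ : ℂ)) (Metric.ball (0 : ℂ) 1) := by
      intro w hw
      apply ContinuousAt.continuousWithinAt
      have hAc : ContinuousAt A w := by fun_prop
      exact (continuousAt_cpow_const (hA w hw)).comp hAc
    have h1 : ContinuousOn (fun w => (1 + w) * (starRingEnd ℂ) (Rfun w (κ : ℂ)))
        (Metric.ball (0 : ℂ) 1) :=
      ((continuousOn_const.add continuousOn_id).mul
        (Complex.continuous_conj.comp_continuousOn hR))
    exact Complex.continuous_re.comp_continuousOn h1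
  have hf0 : f 0 = 1 := by
    have : Rfun 0 (κ : ℂ) = 1 := by
      have : ((1 : ℂ) - 0) ^ 2 + 4 * (κ : ℂ) ^ 2 * 0 = 1 := by ring
      rw [Rfun, this, Complex.one_cpow]
    simp [hfdef, this]
  -- main positivity by intermediate value
  have hpos : 0 < f z := by
    by_contra hle
    push_neg at hle
    have hlt : f z < 0 := lt_of_le_of_ne hle (hne z hz)
    have h0mem : (0 : ℂ) ∈ Metric.ball (0 : ℂ) 1 := Metric.mem_ball_self one_pos
    have := (convex_ball (0:ℂ) 1).isPreconnected.intermediate_value hz h0mem hcont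
    have h0 : (0 : ℝ) ∈ Set.Icc (f z) (f 0) := by
      rw [hf0]; exact ⟨le_of_lt hlt, by norm_num⟩
    obtain ⟨w, hw, hfw⟩ := this h0
    exact hne w hw hfw
  refine ⟨hpos, ?_, ?_, ?_⟩
  · -- second part
    have h1 : Complex.normSq (1 + z - Rfun z (κ : ℂ)) < Complex.normSq (1 + z + Rfun z (κ : ℂ)) := by
      rw [Complex.normSq_add, Complex.normSq_sub]
      have := hpos
      simp only [hfdef] at this
      linarith
    rw [Complex.norm_def, Complex.norm_def]
    exact Real.sqrt_lt_sqrt (Complex.normSq_nonneg _) h1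
  · -- the identity
    have habs : ‖1 + z - Rfun z (κ : ℂ)‖ < ‖1 + z + Rfun z (κ : ℂ)‖ := by
      have h1 : Complex.normSq (1 + z - Rfun z (κ : ℂ)) < Complex.normSq (1 + z + Rfun z (κ : ℂ)) := by
        rw [Complex.normSq_add, Complex.normSq_sub]
        simp only [hfdef] at hpos
        linarith
      rw [Complex.norm_def, Complex.norm_def]
      exact Real.sqrt_lt_sqrt (Complex.normSq_nonneg _) h1
    have hne2 : 1 + z + Rfun z (κ : ℂ) ≠ 0 := by
      intro h
      rw [h] at habs
      simp only [norm_zero] at habs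
      exact (norm_nonneg _).not_gt habs
    rw [div_eq_div_iff hne2 (pow_ne_zero 2 hne2)]
    have hR2 := hsq z hz
    simp only [hAdef] at hR2
    linear_combination (-(1 + z + Rfun z (κ : ℂ))) * hR2
  · -- membership in the ball
    have habs : ‖1 + z - Rfun z (κ : ℂ)‖ < ‖1 + z + Rfun z (κ : ℂ)‖ := by
      have h1 : Complex.normSq (1 + z - Rfun z (κ : ℂ)) < Complex.normSq (1 + z + Rfun z (κ : ℂ)) := by
        rw [Complex.normSq_add, Complex.normSq_sub]
        simp only [hfdef] at hpos
        linarith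
      rw [Complex.norm_def, Complex.norm_def]
      exact Real.sqrt_lt_sqrt (Complex.normSq_nonneg _) h1
    have hne2 : 1 + z + Rfun z (κ : ℂ) ≠ 0 := by
      intro h
      rw [h] at habs
      simp only [norm_zero] at habs
      exact (norm_nonneg _).not_gt habs
    rw [Metric.mem_ball, dist_zero_right, norm_div, div_lt_one]
    · exact habs
    · exact (norm_pos_iff.mpr hne2)
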